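/- arXiv:2112.12184 — 2 statements merged into one kernel-verified Lean document; each statement's English description precedes it below -/
import Mathlib

section
/- Let φ₁,ℏ, φ₂,ℏ : PS → R[[ℏ]] be multiplicative functions on partitioned permutations such that φ_{i,ℏ}(𝒜,α) = ℏ^{|(𝒜,α)|} φ_i(𝒜,α) + o(ℏ^{|(𝒜,α)|}) for functions φ_i : PS → R. If φ₁,ℏ = ζ_ℏ ⊛ φ₂,ℏ (extended convolution with the extended zeta function), then φ₁ = ζ ∗ φ₂ (ordinary convolution with the zeta function). -/
open Equiv

/-- The setoid on `β` whose classes are the supports of the cycles of `α`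
(fixed points giving singleton classes); this is the partition `𝟎_α`. -/
def cycleSetoid {β : Type*} (α : Equiv.Perm β) : Setoid β :=
  ⟨α.SameCycle, ⟨fun x => Equiv.Perm.SameCycle.refl α x, fun h => h.symm, fun h h' => h.trans h'⟩⟩

/-- Number of blocks of a set partition (encoded as a setoid). -/
noncomputable def numBlocks {β : Type*} (s : Setoid β) : ℕ :=
  Nat.card (Quotient s)

/-- Number of cycles of a permutation, counting fixed points as cycles. -/
noncomputable def numCycles {β : Type*} (α : Equiv.Perm β) : ℕ :=
  numBlocks (cycleSetoid α)

/-- The colength `|α| = d - #cycles(α)` of a permutation of `Fin d`. -/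
noncomputable def permColength {d : ℕ} (α : Equiv.Perm (Fin d)) : ℕ :=
  d - numCycles α

/-- A partitioned permutation of `[d]`: a pair `(𝒜, α)` of a set partition `𝒜` of `[d]`
and a permutation `α` of `[d]` such that `𝟎_α ≤ 𝒜`, i.e. every cycle support of `α`
is contained in a block of `𝒜`. -/
structure PartPerm (d : ℕ) where
  part : Setoid (Fin d)
  perm : Equiv.Perm (Fin d)
  refines : ∀ x y : Fin d, perm.SameCycle x y → part.r x y

theorem PartPerm.ext' {d : ℕ} {p q : PartPerm d}
    (h1 : p.part = q.part) (h2 : p.perm = q.perm) : p = q := by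
  cases p; cases q; simp_all

/-- Colength `|(𝒜,α)| = 2|𝒜| - |α| = 2(d - #𝒜) - (d - #cycles α)`, as an integer. -/
noncomputable def pairColength {d : ℕ} (s : Setoid (Fin d)) (σ : Equiv.Perm (Fin d)) : ℤ :=
  2 * ((d : ℤ) - numBlocks s) - ((d : ℤ) - numCycles σ)

noncomputable def PartPerm.colength {d : ℕ} (p : PartPerm d) : ℤ :=
  pairColength p.part p.perm

/-- Cycle supports of `α∘β` lie in blocks of `𝒜 ∨ ℬ`: closure of partitioned
permutations under the extended multiplication. -/
theorem refines_mul {d : ℕ} {A B : Setoid (Fin d)} {α β : Equiv.Perm (Fin d)}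
    (hA : ∀ x y, α.SameCycle x y → A.r x y) (hB : ∀ x y, β.SameCycle x y → B.r x y) :
    ∀ x y, (α * β).SameCycle x y → (A ⊔ B).r x y := by
  classical
  have hle1 : ∀ x y : Fin d, A.r x y → (A ⊔ B).r x y := fun x y h =>
    Setoid.le_def.mp (le_sup_left : A ≤ A ⊔ B) h
  have hle2 : ∀ x y : Fin d, B.r x y → (A ⊔ B).r x y := fun x y h =>
    Setoid.le_def.mp (le_sup_right : B ≤ A ⊔ B) h
  have step : ∀ z : Fin d, (A ⊔ B).r z ((α * β) z) := by
    intro z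
    refine (A ⊔ B).trans (hle2 z (β z) (hB z (β z) ⟨1, by simp⟩)) ?_
    exact hle1 (β z) (α (β z)) (hA (β z) (α (β z)) ⟨1, by simp⟩)
  have key : ∀ n : ℕ, ∀ z : Fin d, (A ⊔ B).r z (((α * β) ^ n) z) := by
    intro n
    induction n with
    | zero => intro z; simpa using (A ⊔ B).refl z
    | succ n ih =>
      intro z
      have h1 := ih z
      have h2 := step (((α * β) ^ n) z)
      have h3 : ((α * β) ^ (n + 1)) z = (α * β) (((α * β) ^ n) z) := by
        rw [pow_succ']
        simp [Equiv.Perm.mul_apply]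
      rw [h3]
      exact (A ⊔ B).trans h1 h2
  intro x y h
  obtain ⟨i, hi0, _, hi⟩ := Equiv.Perm.SameCycle.exists_pow_eq (α * β) h
  rw [← hi]
  exact key i x

/-- The unit partitioned permutation `(𝟎_id, id)`. -/
def PartPerm.one (d : ℕ) : PartPerm d :=
  ⟨⊥, 1, fun x y h => by
    have hxy : x = y := Equiv.Perm.sameCycle_one.mp h
    subst hxy
    exact (⊥ : Setoid (Fin d)).refl x⟩

/-- The extended multiplication `(𝒜,α) ⊙ (ℬ,β) = (𝒜 ∨ ℬ, α∘β)` of partitioned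
permutations. -/
def PartPerm.mul {d : ℕ} (p q : PartPerm d) : PartPerm d :=
  ⟨p.part ⊔ q.part, p.perm * q.perm, refines_mul p.refines q.refines⟩

instance {d : ℕ} : Finite (Setoid (Fin d)) :=
  Finite.of_injective (fun s => s.r) (fun s t h => by cases s; cases t; simp_all)

instance {d : ℕ} : Finite (PartPerm d) :=
  Finite.of_injective (fun p => (p.part, p.perm))
    (fun p q h => PartPerm.ext' (congrArg Prod.fst h) (congrArg Prod.snd h))

/-- The cycle type of a permutation of a finite type, including fixed points
as cycles of length `1`; as a multiset, this is a partition of the cardinality. -/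
noncomputable def fullCycleType {β : Type*} [Finite β] (α : Equiv.Perm β) : Multiset ℕ :=
  letI := Fintype.ofFinite β
  letI := Classical.decEq β
  Multiset.replicate (Nat.card β - α.cycleType.sum) 1 + α.cycleType

/-- Each block of a partitioned permutation is invariant under the permutation, which
therefore restricts to a permutation `α|_A` of the block. -/
def blockPerm {d : ℕ} (p : PartPerm d) (c : Quotient p.part) :
    Equiv.Perm {x : Fin d // Quotient.mk p.part x = c} :=
  p.perm.subtypePerm (by
    intro x
    have h : p.part.r x (p.perm x) := p.refines x (p.perm x) ⟨1, by simp⟩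
    have h' : Quotient.mk p.part x = Quotient.mk p.part (p.perm x) := Quotient.sound h
    constructor <;> intro hx <;> simp_all)

/-- A function on partitioned permutations of `[d]` is multiplicative if it is of the
form `f(𝒜,α) = Π_{A ∈ 𝒜} g(λ(α|_A))` where `g` is a function of the cycle type only
(this encodes that `f(𝟏_d,σ)` depends only on the conjugacy class of `σ`, together
with the factorisation over blocks). -/
def IsMultiplicativeFn {R : Type*} [CommRing R] {d : ℕ} (f : PartPerm d → R) : Prop :=
  ∃ g : Multiset ℕ → R, ∀ p : PartPerm d,
    f p = ∏ᶠ c : Quotient p.part, g (fullCycleType (blockPerm p c))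

/-- The extended convolution `(f₁ ⊛ f₂)(𝒞,γ) = Σ_{(𝒜,α)⊙(ℬ,β)=(𝒞,γ)} f₁(𝒜,α) f₂(ℬ,β)`. -/
noncomputable def extConv {R : Type*} [CommRing R] {d : ℕ} (f g : PartPerm d → R) :
    PartPerm d → R :=
  open scoped Classical in
  fun c => ∑ᶠ q : PartPerm d × PartPerm d,
    if q.1.mul q.2 = c then f q.1 * g q.2 else 0

/-- The convolution `(f₁ ∗ f₂)(𝒞,γ)`, summing only over factorisations for which the
colengths add up: `|(𝒜,α)| + |(ℬ,β)| = |(𝒞,γ)|`. -/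
noncomputable def starConv {R : Type*} [CommRing R] {d : ℕ} (f g : PartPerm d → R) :
    PartPerm d → R :=
  open scoped Classical in
  fun c => ∑ᶠ q : PartPerm d × PartPerm d,
    if q.1.mul q.2 = c ∧ q.1.colength + q.2.colength = c.colength
    then f q.1 * g q.2 else 0

/-- The zeta function on partitioned permutations: `ζ(𝒜,α) = 1` if `𝒜 = 𝟎_α`, else `0`. -/
noncomputable def zetaFn (R : Type*) [CommRing R] {d : ℕ} : PartPerm d → R :=
  open scoped Classical in
  fun p => if p.part = cycleSetoid p.perm then 1 else 0

/-- The extended zeta function `ζ_ℏ(𝒜,α) = ℏ^{|α|}` if `𝒜 = 𝟎_α`, else `0`. -/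
noncomputable def zetaHbarFn (R : Type*) [CommRing R] {d : ℕ} : PartPerm d → PowerSeries R :=
  open scoped Classical in
  fun p => if p.part = cycleSetoid p.perm
    then (PowerSeries.X : PowerSeries R) ^ permColength p.perm else 0

/-- `φ_ℏ(𝒜,α) = ℏ^{|(𝒜,α)|} φ(𝒜,α) + o(ℏ^{|(𝒜,α)|})`: all coefficients of `φ_ℏ(𝒜,α)`
below the colength vanish, and the coefficient at the colength is `φ(𝒜,α)`. -/
def IsLeadingOrder {R : Type*} [CommRing R] {d : ℕ}
    (φℏ : PartPerm d → PowerSeries R) (φ : PartPerm d → R) : Prop :=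
  ∀ p : PartPerm d,
    (∀ n : ℕ, (n : ℤ) < p.colength → PowerSeries.coeff n (φℏ p) = 0) ∧
    PowerSeries.coeff p.colength.toNat (φℏ p) = φ p


set_option linter.unusedSectionVars false


def pairSetoid {X : Type*} (a b : X) : Setoid X :=
  ⟨fun x y => x = y ∨ (x = a ∧ y = b) ∨ (x = b ∧ y = a), by
    constructor
    · exact fun x => Or.inl rfl
    · intro x y h; tauto
    · intro x y z h1 h2
      rcases h1 with rfl | ⟨rfl, rfl⟩ | ⟨rfl, rfl⟩ <;> tauto⟩

lemma pairSetoid_le {X : Type*} {s : Setoid X} {a b : X} (h : s.r a b) : pairSetoid a b ≤ s := by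
  rw [Setoid.le_def]
  rintro x y (rfl | ⟨rfl, rfl⟩ | ⟨rfl, rfl⟩)
  exacts [s.refl x, h, s.symm h]

def joinPair {X : Type*} (s : Setoid X) (a b : X) : Setoid X :=
  ⟨fun x y => s.r x y ∨ (s.r x a ∧ s.r b y) ∨ (s.r x b ∧ s.r a y), by
    constructor
    · exact fun x => Or.inl (s.refl x)
    · rintro x y (h | ⟨h1, h2⟩ | ⟨h1, h2⟩)
      · exact Or.inl (s.symm h)
      · exact Or.inr (Or.inr ⟨s.symm h2, s.symm h1⟩)
      · exact Or.inr (Or.inl ⟨s.symm h2, s.symm h1⟩)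
    · rintro x y z (h | ⟨h1, h2⟩ | ⟨h1, h2⟩) (h' | ⟨h1', h2'⟩ | ⟨h1', h2'⟩)
      · exact Or.inl (s.trans h h')
      · exact Or.inr (Or.inl ⟨s.trans h h1', h2'⟩)
      · exact Or.inr (Or.inr ⟨s.trans h h1', h2'⟩)
      · exact Or.inr (Or.inl ⟨h1, s.trans h2 h'⟩)
      · exact Or.inl (s.trans h1 (s.trans (s.symm (s.trans h2 h1')) h2'))
      · exact Or.inl (s.trans h1 h2')
      · exact Or.inr (Or.inr ⟨h1, s.trans h2 h'⟩)
      · exact Or.inl (s.trans h1 h2')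
      · exact Or.inl (s.trans h1 (s.trans (s.symm (s.trans h2 h1')) h2'))⟩

lemma sup_pair_eq {X : Type*} (s : Setoid X) (a b : X) :
    s ⊔ pairSetoid a b = joinPair s a b := by
  apply le_antisymm
  · apply sup_le
    · rw [Setoid.le_def]; exact fun {x y} h => Or.inl h
    · rw [Setoid.le_def]
      rintro x y (rfl | ⟨rfl, rfl⟩ | ⟨rfl, rfl⟩)
      · exact Or.inl (s.refl x)
      · exact Or.inr (Or.inl ⟨s.refl _, s.refl _⟩)
      · exact Or.inr (Or.inr ⟨s.refl _, s.refl _⟩)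
  · rw [Setoid.le_def]
    have hs : s ≤ s ⊔ pairSetoid a b := le_sup_left
    have hp : pairSetoid a b ≤ s ⊔ pairSetoid a b := le_sup_right
    rintro x y (h | ⟨h1, h2⟩ | ⟨h1, h2⟩)
    · exact Setoid.le_def.mp hs h
    · exact (s ⊔ pairSetoid a b).trans (Setoid.le_def.mp hs h1)
        ((s ⊔ pairSetoid a b).trans (Setoid.le_def.mp hp (Or.inr (Or.inl ⟨rfl, rfl⟩)))
          (Setoid.le_def.mp hs h2))
    · exact (s ⊔ pairSetoid a b).trans (Setoid.le_def.mp hs h1)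
        ((s ⊔ pairSetoid a b).trans (Setoid.le_def.mp hp (Or.inr (Or.inr ⟨rfl, rfl⟩)))
          (Setoid.le_def.mp hs h2))

section

variable {X : Type*} [Finite X]

/-- The canonical map between quotients by comparable setoids. -/
def qmap {s t : Setoid X} (h : s ≤ t) : Quotient s → Quotient t :=
  Quotient.map' id (fun _ _ hxy => Setoid.le_def.mp h hxy)

lemma qmap_mk {s t : Setoid X} (h : s ≤ t) (x : X) :
    qmap h (Quotient.mk s x) = Quotient.mk t x := rfl

lemma qmap_surjective {s t : Setoid X} (h : s ≤ t) : Function.Surjective (qmap h) := by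
  rintro ⟨x⟩
  exact ⟨Quotient.mk s x, rfl⟩

lemma numBlocks_mono {s t : Setoid X} (h : s ≤ t) : numBlocks t ≤ numBlocks s :=
  Nat.card_le_card_of_surjective _ (qmap_surjective h)

lemma numBlocks_le_card (s : Setoid X) : numBlocks s ≤ Nat.card X :=
  Nat.card_le_card_of_surjective (Quotient.mk s) (Quotient.mk_surjective)

lemma numBlocks_pos (s : Setoid X) [Nonempty X] : 0 < numBlocks s :=
  @Nat.card_pos _ (by exact ⟨Quotient.mk s (Classical.arbitrary X)⟩) _
end

section
variable {X : Type*} [Finite X]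

lemma le_joinPair (s : Setoid X) (a b : X) : s ≤ joinPair s a b := by
  rw [Setoid.le_def]; exact fun {x y} h => Or.inl h

lemma numBlocks_sup_pair (s : Setoid X) {a b : X} (hab : ¬ s.r a b) :
    numBlocks s = numBlocks (s ⊔ pairSetoid a b) + 1 := by
  classical
  rw [sup_pair_eq]
  set t := joinPair s a b with ht
  have hle : s ≤ t := le_joinPair s a b
  have hbij : Function.Bijective
      (fun q : {q : Quotient s // q ≠ Quotient.mk s b} => qmap hle q.1) := by
    constructor
    · rintro ⟨q1, hq1⟩ ⟨q2, hq2⟩ h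
      induction q1 using Quotient.ind with | _ x =>
      induction q2 using Quotient.ind with | _ y =>
      simp only [qmap_mk] at h
      have hr : t.r x y := Quotient.exact h
      rcases hr with h' | ⟨h1, h2⟩ | ⟨h1, h2⟩
      · exact Subtype.ext (Quotient.sound h')
      · exact absurd (Quotient.sound h2 : Quotient.mk s b = Quotient.mk s y)
          (fun hh => hq2 hh.symm)
      · exact absurd (Quotient.sound h1 : Quotient.mk s x = Quotient.mk s b) hq1
    · rintro ⟨y⟩
      by_cases hyb : s.r y b
      · refine ⟨⟨Quotient.mk s a, fun hh => hab (Quotient.exact hh)⟩, ?_⟩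
        simp only [qmap_mk]
        have hray : t.r a y := Or.inr (Or.inl ⟨s.refl a, s.symm hyb⟩)
        exact Quotient.sound hray
      · exact ⟨⟨Quotient.mk s y, fun hh => hyb (Quotient.exact hh)⟩, rfl⟩
  have hcard : Nat.card {q : Quotient s // q ≠ Quotient.mk s b} = Nat.card (Quotient t) :=
    Nat.card_eq_of_bijective _ hbij
  letI : Fintype (Quotient s) := Fintype.ofFinite _
  have h1 : Nat.card {q : Quotient s // q ≠ Quotient.mk s b}
      = Fintype.card {q : Quotient s // ¬ (q = Quotient.mk s b)} := Nat.card_eq_fintype_card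
  have h2 : Fintype.card {q : Quotient s // ¬ (q = Quotient.mk s b)}
      = Fintype.card (Quotient s) - Fintype.card {q : Quotient s // q = Quotient.mk s b} :=
    Fintype.card_subtype_compl _
  have h3 : Fintype.card {q : Quotient s // q = Quotient.mk s b} = 1 :=
    Fintype.card_subtype_eq _
  have h4 : 1 ≤ Fintype.card (Quotient s) :=
    Fintype.card_pos_iff.mpr ⟨Quotient.mk s b⟩
  have h5 : numBlocks s = Fintype.card (Quotient s) := Nat.card_eq_fintype_card
  have h6 : numBlocks t = Nat.card (Quotient t) := rfl
  omega

lemma numBlocks_le_sup_pair (s : Setoid X) (a b : X) :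
    numBlocks s ≤ numBlocks (s ⊔ pairSetoid a b) + 1 := by
  by_cases h : s.r a b
  · have : s ⊔ pairSetoid a b = s := sup_eq_left.mpr (pairSetoid_le h)
    rw [this]; omega
  · exact le_of_eq (numBlocks_sup_pair s h)
end

section
variable {X : Type*} [Finite X]

lemma diamond_aux : ∀ (n : ℕ) (s s' t : Setoid X), numBlocks s ≤ n → s ≤ s' →
    numBlocks (s ⊔ t) + numBlocks s' ≤ numBlocks s + numBlocks (s' ⊔ t) := by
  intro n
  induction n with
  | zero =>
    intro s s' t hn h
    by_cases hss : s = s'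
    · subst hss; omega
    · exfalso
      have : ∃ a b : X, s'.r a b ∧ ¬ s.r a b := by
        by_contra hc
        push_neg at hc
        exact hss (le_antisymm h (Setoid.le_def.mpr fun {a b} hab => by
          by_contra hs
          exact hs (hc a b hab) ))
      obtain ⟨a, b, _, hnab⟩ := this
      have := numBlocks_sup_pair s hnab
      omega
  | succ n ih =>
    intro s s' t hn h
    by_cases hss : s = s'
    · subst hss; omega
    · have : ∃ a b : X, s'.r a b ∧ ¬ s.r a b := by
        by_contra hc
        push_neg at hc
        exact hss (le_antisymm h (Setoid.le_def.mpr fun {a b} hab => by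
          by_contra hs
          exact hs (hc a b hab)))
      obtain ⟨a, b, hs'ab, hnab⟩ := this
      set s₁ := s ⊔ pairSetoid a b with hs₁
      have hmerge : numBlocks s = numBlocks s₁ + 1 := numBlocks_sup_pair s hnab
      have hs₁le : s₁ ≤ s' := sup_le h (pairSetoid_le hs'ab)
      have hsupeq : s₁ ⊔ t = (s ⊔ t) ⊔ pairSetoid a b := by
        rw [hs₁]; exact sup_right_comm s (pairSetoid a b) t
      have hst : numBlocks (s ⊔ t) ≤ numBlocks (s₁ ⊔ t) + 1 := by
        rw [hsupeq]; exact numBlocks_le_sup_pair (s ⊔ t) a b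
      have hih := ih s₁ s' t (by omega) hs₁le
      omega

lemma diamond (s s' t : Setoid X) (h : s ≤ s') :
    numBlocks (s ⊔ t) + numBlocks s' ≤ numBlocks s + numBlocks (s' ⊔ t) :=
  diamond_aux (numBlocks s) s s' t le_rfl h
end


section PermLemmas
variable {X : Type*} [DecidableEq X]

lemma fixed_sameCycle {σ : Equiv.Perm X} {x y : X} (hy : σ y = y) (h : σ.SameCycle x y) :
    x = y := by
  obtain ⟨i, hi⟩ := h
  have hfix : (σ ^ i) y = y := Equiv.Perm.zpow_apply_eq_self_of_apply_eq_self hy i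
  calc x = (σ ^ i)⁻¹ ((σ ^ i) x) := by simp
  _ = (σ ^ i)⁻¹ y := by rw [hi]
  _ = (σ ^ i)⁻¹ ((σ ^ i) y) := by rw [hfix]
  _ = y := by simp

lemma swap_zpow (a b : X) (i : ℤ) :
    (Equiv.swap a b) ^ i = 1 ∨ (Equiv.swap a b) ^ i = Equiv.swap a b := by
  have h2 : (Equiv.swap a b) ^ (2 : ℤ) = 1 := by
    rw [show (2:ℤ) = 1 + 1 by norm_num, zpow_add, zpow_one, Equiv.swap_mul_self]
  rcases Int.even_or_odd i with ⟨k, hk⟩ | ⟨k, hk⟩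
  · left
    rw [hk, show k + k = 2 * k by ring, zpow_mul, h2, one_zpow]
  · right
    rw [hk, zpow_add, zpow_mul, h2, one_zpow, zpow_one, one_mul]

lemma cycleSetoid_swap_le (a b : X) : cycleSetoid (Equiv.swap a b) ≤ pairSetoid a b := by
  rw [Setoid.le_def]
  rintro x y ⟨i, hi⟩
  rcases swap_zpow a b i with h | h <;> rw [h] at hi
  · exact Or.inl (by simpa using hi)
  · by_cases hxa : x = a
    · subst hxa
      rw [Equiv.swap_apply_left] at hi
      by_cases hab : x = b
      · exact Or.inl (by rw [← hi, hab])
      · exact Or.inr (Or.inl ⟨rfl, hi.symm⟩)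
    · by_cases hxb : x = b
      · subst hxb
        rw [Equiv.swap_apply_right] at hi
        exact Or.inr (Or.inr ⟨rfl, hi.symm⟩)
      · rw [Equiv.swap_apply_of_ne_of_ne hxa hxb] at hi
        exact Or.inl hi

variable [Finite X]

lemma sameCycle_mul_swap {σ : Equiv.Perm X} {a b : X} (hab : a ≠ b)
    (h : ¬ σ.SameCycle a b) : (σ * Equiv.swap a b).SameCycle a b := by
  set m := Function.minimalPeriod (⇑σ) b with hm
  have hper : Function.IsPeriodicPt (⇑σ) (orderOf σ) b := by
    show (⇑σ)^[orderOf σ] b = b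
    rw [← Equiv.Perm.coe_pow, pow_orderOf_eq_one]; rfl
  have hmpos : 0 < m := hper.minimalPeriod_pos (orderOf_pos σ)
  have hmb : (σ ^ m) b = b := by
    have := Function.isPeriodicPt_minimalPeriod (⇑σ) b
    rw [Equiv.Perm.coe_pow]
    exact this
  have key : ∀ k, 1 ≤ k → k ≤ m → ((σ * Equiv.swap a b) ^ k) a = (σ ^ k) b := by
    intro k
    induction k with
    | zero => omega
    | succ k ih =>
      intro _ h2
      rcases Nat.eq_zero_or_pos k with rfl | hk1
      · simp [Equiv.Perm.mul_apply]
      · have hkm : k < m := by omega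
        have hk := ih hk1 (le_of_lt hkm)
        have hne_b : (σ ^ k) b ≠ b := by
          intro hh
          refine Function.not_isPeriodicPt_of_pos_of_lt_minimalPeriod
            (by omega : k ≠ 0) hkm ?_
          show (⇑σ)^[k] b = b
          rw [← Equiv.Perm.coe_pow]; exact hh
        have hne_a : (σ ^ k) b ≠ a := by
          intro hh
          exact h (Equiv.Perm.SameCycle.symm ⟨(k : ℤ), by rw [zpow_natCast]; exact hh⟩)
        rw [pow_succ', Equiv.Perm.mul_apply, hk, Equiv.Perm.mul_apply,
          Equiv.swap_apply_of_ne_of_ne hne_a hne_b, pow_succ', Equiv.Perm.mul_apply]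
  exact ⟨(m : ℤ), by rw [zpow_natCast, key m hmpos le_rfl, hmb]⟩

end PermLemmas

section Genus
variable {d : ℕ}

lemma numCycles_le (σ : Perm (Fin d)) : numCycles σ ≤ d := by
  have := numBlocks_le_card (cycleSetoid σ)
  simpa [numCycles, Nat.card_eq_fintype_card] using this

lemma numBlocks_le (s : Setoid (Fin d)) : numBlocks s ≤ d := by
  have := numBlocks_le_card s
  simpa [Nat.card_eq_fintype_card] using this

lemma perm_eq_one_of_numCycles (σ : Perm (Fin d)) (h : numCycles σ = d) : σ = 1 := by
  classical
  letI : Fintype (Quotient (cycleSetoid σ)) := Fintype.ofFinite _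
  have hsurj : Function.Surjective (Quotient.mk (cycleSetoid σ)) := Quotient.mk_surjective
  have hcard : Fintype.card (Quotient (cycleSetoid σ)) = Fintype.card (Fin d) := by
    have h1 : numCycles σ = Fintype.card (Quotient (cycleSetoid σ)) := Nat.card_eq_fintype_card
    simp [← h1, h]
  have hbij : Function.Bijective (Quotient.mk (cycleSetoid σ)) := by
    rw [Fintype.bijective_iff_surjective_and_card]
    exact ⟨hsurj, hcard.symm⟩
  ext x
  have hsc : σ.SameCycle x (σ x) := ⟨1, by simp⟩
  have := hbij.1 (Quotient.sound (hsc : (cycleSetoid σ).r x (σ x)))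
  simp [← this]

lemma numCycles_one_ : numCycles (1 : Perm (Fin d)) = d := by
  classical
  have hinj : Function.Injective (Quotient.mk (cycleSetoid (1 : Perm (Fin d)))) := by
    intro x y h
    exact Equiv.Perm.sameCycle_one.mp (Quotient.exact h)
  have := Nat.card_eq_of_bijective _ ⟨hinj, Quotient.mk_surjective⟩
  simpa [numCycles, numBlocks, Nat.card_eq_fintype_card] using this.symm

lemma genus_aux : ∀ (n : ℕ) (β α : Perm (Fin d)), d - numCycles β ≤ n →
    2 * ((d : ℤ) - numBlocks (cycleSetoid α ⊔ cycleSetoid β))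
      ≤ ((d : ℤ) - numCycles α) + ((d : ℤ) - numCycles β) + ((d : ℤ) - numCycles (α * β)) := by
  intro n
  induction n with
  | zero =>
    intro β α hn
    have hle := numCycles_le β
    have hβ1 : β = 1 := perm_eq_one_of_numCycles β (by omega)
    subst hβ1
    have h1 : cycleSetoid (1 : Perm (Fin d)) ≤ cycleSetoid α := by
      rw [Setoid.le_def]
      intro x y h
      have : x = y := Equiv.Perm.sameCycle_one.mp h
      subst this
      exact (cycleSetoid α).refl x
    rw [sup_eq_left.mpr h1, mul_one, numCycles_one_]
    have : numBlocks (cycleSetoid α) = numCycles α := rfl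
    rw [this]
    omega
  | succ n ih =>
    intro β α hn
    by_cases hβ1 : β = 1
    · subst hβ1
      have h1 : cycleSetoid (1 : Perm (Fin d)) ≤ cycleSetoid α := by
        rw [Setoid.le_def]
        intro x y h
        have : x = y := Equiv.Perm.sameCycle_one.mp h
        subst this
        exact (cycleSetoid α).refl x
      rw [sup_eq_left.mpr h1, mul_one, numCycles_one_]
      have : numBlocks (cycleSetoid α) = numCycles α := rfl
      rw [this]
      omega
    · -- pick a non-fixed point
      have : ∃ a, β a ≠ a := by
        by_contra hc
        push_neg at hc
        exact hβ1 (Equiv.ext fun x => by simp [hc x])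
      obtain ⟨a, hba⟩ := this
      set b := β a with hb
      have hab : a ≠ b := fun h => hba h.symm
      set τ := Equiv.swap a b with hτdef
      set β' := β * τ with hβ'def
      have hββ' : β = β' * τ := by
        rw [hβ'def, mul_assoc, Equiv.swap_mul_self, mul_one]
      have hfixb : β' b = b := by
        rw [hβ'def]
        simp [hτdef, Equiv.Perm.mul_apply, Equiv.swap_apply_right, ← hb]
      have hnotcyc : ¬ β'.SameCycle a b := fun h => hab (fixed_sameCycle hfixb h)
      have hPle0β : pairSetoid a b ≤ cycleSetoid β :=
        pairSetoid_le (⟨1, by simp [hb]⟩ : β.SameCycle a b)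
      have hswapτ : ∀ x y : Fin d, τ.SameCycle x y → (pairSetoid a b).r x y :=
        fun x y h => Setoid.le_def.mp (cycleSetoid_swap_le a b) h
      have h0β'le : cycleSetoid β' ≤ cycleSetoid β := by
        have hmm : ∀ x y, (β * τ).SameCycle x y → (cycleSetoid β ⊔ cycleSetoid β).r x y :=
          refines_mul (fun x y h => h)
            (fun x y h => Setoid.le_def.mp hPle0β (hswapτ x y h))
        rw [sup_idem] at hmm
        rw [Setoid.le_def]
        intro x y h
        exact hmm x y h
      have h0βle : cycleSetoid β ≤ cycleSetoid β' ⊔ pairSetoid a b := by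
        have hmm2 : ∀ x y, (β' * τ).SameCycle x y →
            (cycleSetoid β' ⊔ pairSetoid a b).r x y :=
          refines_mul (fun x y h => h) hswapτ
        rw [Setoid.le_def]
        intro x y h
        exact hmm2 x y (by rw [hββ'] at h; exact h)
      have h0βeq : cycleSetoid β = cycleSetoid β' ⊔ pairSetoid a b :=
        le_antisymm h0βle (sup_le h0β'le hPle0β)
      have hcount : numCycles β' = numCycles β + 1 := by
        have := numBlocks_sup_pair (cycleSetoid β') (hnotcyc : ¬ (cycleSetoid β').r a b)
        rw [← h0βeq] at this
        exact this
      have hβ'le := numCycles_le β'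
      have hβle := numCycles_le β
      set γ' := α * β' with hγ'def
      have hγ : α * β = γ' * τ := by rw [hγ'def, hββ', ← mul_assoc]
      have hγ'γ : γ' = (α * β) * τ := by
        rw [hγ, mul_assoc, Equiv.swap_mul_self, mul_one]
      have h0γ'le : cycleSetoid γ' ≤ cycleSetoid (α * β) ⊔ pairSetoid a b := by
        have hmm3 : ∀ x y, ((α * β) * τ).SameCycle x y →
            (cycleSetoid (α * β) ⊔ pairSetoid a b).r x y :=
          refines_mul (fun x y h => h) hswapτ
        rw [Setoid.le_def]
        intro x y h
        exact hmm3 x y (by rw [hγ'γ] at h; exact h)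
      have hIH := ih β' α (by omega)
      rw [← hγ'def] at hIH
      by_cases hcyc : γ'.SameCycle a b
      · -- a, b already in the same cycle of γ' = α β'
        have hPle0γ' : pairSetoid a b ≤ cycleSetoid γ' := pairSetoid_le hcyc
        have h0γ'leαβ' : cycleSetoid γ' ≤ cycleSetoid α ⊔ cycleSetoid β' := by
          rw [Setoid.le_def]
          intro x y h
          exact refines_mul (fun x y h => h) (fun x y h => h) x y h
        have hsupeq : cycleSetoid α ⊔ cycleSetoid β = cycleSetoid α ⊔ cycleSetoid β' := by
          rw [h0βeq, ← sup_assoc]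
          exact sup_eq_left.mpr (hPle0γ'.trans h0γ'leαβ')
        have hγbound : numCycles (α * β) ≤ numCycles γ' + 1 := by
          have hmono := numBlocks_mono h0γ'le
          have hup := numBlocks_le_sup_pair (cycleSetoid (α * β)) a b
          have e1 : numBlocks (cycleSetoid γ') = numCycles γ' := rfl
          have e2 : numBlocks (cycleSetoid (α * β)) = numCycles (α * β) := rfl
          omega
        rw [hsupeq]
        have hγ'le := numCycles_le γ'
        have hγle := numCycles_le (α * β)
        omega
      · -- the cycles of a and b in γ' are distinct; they join in γ
        have hKey : (α * β).SameCycle a b := by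
          rw [hγ]
          exact sameCycle_mul_swap hab hcyc
        have hPle0γ : pairSetoid a b ≤ cycleSetoid (α * β) := pairSetoid_le hKey
        have h0γ'le2 : cycleSetoid γ' ≤ cycleSetoid (α * β) :=
          h0γ'le.trans (sup_le le_rfl hPle0γ)
        have h0γle : cycleSetoid (α * β) ≤ cycleSetoid γ' ⊔ pairSetoid a b := by
          have hmm4 : ∀ x y, (γ' * τ).SameCycle x y →
              (cycleSetoid γ' ⊔ pairSetoid a b).r x y :=
            refines_mul (fun x y h => h) hswapτ
          rw [Setoid.le_def]
          intro x y h
          exact hmm4 x y (by rw [hγ] at h; exact h)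
        have h0γeq : cycleSetoid (α * β) = cycleSetoid γ' ⊔ pairSetoid a b :=
          le_antisymm h0γle (sup_le h0γ'le2 hPle0γ)
        have hγcount : numCycles γ' = numCycles (α * β) + 1 := by
          have := numBlocks_sup_pair (cycleSetoid γ') (hcyc : ¬ (cycleSetoid γ').r a b)
          rw [← h0γeq] at this
          exact this
        have hs1 : cycleSetoid α ⊔ cycleSetoid β
            = (cycleSetoid α ⊔ cycleSetoid β') ⊔ pairSetoid a b := by
          rw [h0βeq, sup_assoc]
        have hs2 : numBlocks (cycleSetoid α ⊔ cycleSetoid β')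
            ≤ numBlocks (cycleSetoid α ⊔ cycleSetoid β) + 1 := by
          rw [hs1]
          exact numBlocks_le_sup_pair _ a b
        have hγ'le := numCycles_le γ'
        have hnb := numBlocks_le (cycleSetoid α ⊔ cycleSetoid β)
        omega

lemma genus (α β : Perm (Fin d)) :
    2 * ((d : ℤ) - numBlocks (cycleSetoid α ⊔ cycleSetoid β))
      ≤ ((d : ℤ) - numCycles α) + ((d : ℤ) - numCycles β) + ((d : ℤ) - numCycles (α * β)) :=
  genus_aux (d - numCycles β) β α le_rfl

end Genus

section Colength
variable {d : ℕ}

lemma cycleSetoid_le_part (p : PartPerm d) : cycleSetoid p.perm ≤ p.part :=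
  Setoid.le_def.mpr fun {x y} h => p.refines x y h

lemma numBlocks_part_le (p : PartPerm d) : numBlocks p.part ≤ numCycles p.perm :=
  numBlocks_mono (cycleSetoid_le_part p)

lemma colength_nonneg (p : PartPerm d) : 0 ≤ p.colength := by
  have h1 := numBlocks_part_le p
  have h2 := numBlocks_le p.part
  have h3 := numCycles_le p.perm
  unfold PartPerm.colength pairColength
  omega

lemma colength_zero_part (p : PartPerm d) (h : p.part = cycleSetoid p.perm) :
    p.colength = (permColength p.perm : ℤ) := by
  have h1 : numBlocks p.part = numCycles p.perm := by rw [h]; rfl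
  have h3 := numCycles_le p.perm
  unfold PartPerm.colength pairColength permColength
  omega

lemma colength_mul_le (p q : PartPerm d) :
    (p.mul q).colength ≤ p.colength + q.colength := by
  have hD1 := diamond (cycleSetoid p.perm) p.part q.part (cycleSetoid_le_part p)
  have hD2 := diamond (cycleSetoid q.perm) q.part (cycleSetoid p.perm) (cycleSetoid_le_part q)
  have hcomm1 : numBlocks (cycleSetoid q.perm ⊔ cycleSetoid p.perm)
      = numBlocks (cycleSetoid p.perm ⊔ cycleSetoid q.perm) := by rw [sup_comm]
  have hcomm2 : numBlocks (q.part ⊔ cycleSetoid p.perm)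
      = numBlocks (cycleSetoid p.perm ⊔ q.part) := by rw [sup_comm]
  have hgen := genus p.perm q.perm
  have e1 : numBlocks (cycleSetoid p.perm) = numCycles p.perm := rfl
  have e2 : numBlocks (cycleSetoid q.perm) = numCycles q.perm := rfl
  have epart : (p.mul q).part = p.part ⊔ q.part := rfl
  have eperm : (p.mul q).perm = p.perm * q.perm := rfl
  unfold PartPerm.colength pairColength
  rw [epart, eperm]
  have hnb := numBlocks_le (p.part ⊔ q.part)
  omega

end Colength

/-- If `φ₁,ℏ`, `φ₂,ℏ` are multiplicative with leading behaviour `φ₁`, `φ₂`, then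
`φ₁,ℏ = ζ_ℏ ⊛ φ₂,ℏ` implies `φ₁ = ζ ∗ φ₂`. -/
theorem leading_order_of_extConv_zeta {R : Type*} [CommRing R] {d : ℕ}
    (φ₁ℏ φ₂ℏ : PartPerm d → PowerSeries R) (φ₁ φ₂ : PartPerm d → R)
    (hm₁ : IsMultiplicativeFn φ₁ℏ) (hm₂ : IsMultiplicativeFn φ₂ℏ)
    (hl₁ : IsLeadingOrder φ₁ℏ φ₁) (hl₂ : IsLeadingOrder φ₂ℏ φ₂)
    (hconv : φ₁ℏ = extConv (zetaHbarFn R) φ₂ℏ) :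
    φ₁ = starConv (zetaFn R) φ₂ := by
  classical
  funext c
  letI : Fintype (PartPerm d × PartPerm d) := Fintype.ofFinite _
  have hc0 : 0 ≤ c.colength := colength_nonneg c
  set n := c.colength.toNat with hn
  have hnc : (n : ℤ) = c.colength := Int.toNat_of_nonneg hc0
  have h1 : φ₁ c = PowerSeries.coeff n (φ₁ℏ c) := (hl₁ c).2.symm
  rw [h1, hconv]
  show PowerSeries.coeff n (extConv (zetaHbarFn R) φ₂ℏ c) = starConv (zetaFn R) φ₂ c
  unfold extConv starConv
  rw [finsum_eq_sum_of_fintype, finsum_eq_sum_of_fintype, map_sum]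
  apply Finset.sum_congr rfl
  rintro ⟨p1, p2⟩ -
  by_cases hmul : p1.mul p2 = c
  · rw [if_pos hmul]
    by_cases hz : p1.part = cycleSetoid p1.perm
    · have hzeta : zetaHbarFn R p1 = (PowerSeries.X : PowerSeries R) ^ permColength p1.perm := by
        unfold zetaHbarFn
        rw [if_pos hz]
      set a := permColength p1.perm with ha
      have hpc : p1.colength = (a : ℤ) := colength_zero_part p1 hz
      have hq2 : 0 ≤ p2.colength := colength_nonneg p2
      have hsub : c.colength ≤ p1.colength + p2.colength := by
        rw [← hmul]
        exact colength_mul_le p1 p2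
      have hcoeff : PowerSeries.coeff n (zetaHbarFn R p1 * φ₂ℏ p2)
          = if a ≤ n then PowerSeries.coeff (n - a) (φ₂ℏ p2) else 0 := by
        rw [hzeta, mul_comm, PowerSeries.coeff_mul_X_pow']
      rw [hcoeff]
      by_cases hadd : p1.colength + p2.colength = c.colength
      · have han : a ≤ n := by omega
        have hna : (n - a : ℕ) = p2.colength.toNat := by omega
        rw [if_pos han, hna, (hl₂ p2).2, if_pos ⟨hmul, hadd⟩]
        unfold zetaFn
        rw [if_pos hz, one_mul]
      · have hstrict : (c.colength : ℤ) < p1.colength + p2.colength :=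
          lt_of_le_of_ne hsub (fun hh => hadd hh.symm)
        have hLHS : (if a ≤ n then PowerSeries.coeff (n - a) (φ₂ℏ p2) else 0) = 0 := by
          by_cases han : a ≤ n
          · rw [if_pos han]
            apply (hl₂ p2).1
            omega
          · rw [if_neg han]
        rw [hLHS, if_neg (fun hh : _ ∧ _ => hadd hh.2)]
    · have hzeta0 : zetaHbarFn R p1 = 0 := by
        unfold zetaHbarFn
        rw [if_neg hz]
      have hzf0 : zetaFn R p1 = 0 := by
        unfold zetaFn
        rw [if_neg hz]
      rw [hzeta0, zero_mul, map_zero]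
      by_cases hcond : p1.mul p2 = c ∧ p1.colength + p2.colength = c.colength
      · rw [if_pos hcond, hzf0, zero_mul]
      · rw [if_neg hcond]
  · rw [if_neg hmul, if_neg (fun hh => hmul hh.1), map_zero]
end

section
/- Block-additivity of colength for products of surfaced permutations: if (𝒜,α,g) ⊙ (ℬ,β,h) = (𝒞,γ,k) with the genus function k defined by k(C) = (|(𝒜|_C, α|_C, g|_C)| + |(ℬ|_C, β|_C, h|_C)| − |(𝒜∨ℬ|_C, α∘β|_C)|)/2 for each block C of 𝒞 = 𝒜∨ℬ, then for every block C: |(𝒜|_C, α|_C, g|_C)| + |(ℬ|_C, β|_C, h|_C)| = |(𝒞|_C, γ|_C, k|_C)|, and moreover k(C) ≥ Σ_{A∈𝒜, A⊆C} g(A) + Σ_{B∈ℬ, B⊆C} h(B), with the difference being a nonnegative integer. -/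
open Equiv

/-- The block of the class `c` of the setoid `s`, as a subset of `Fin d`. -/
def blockOf {d : ℕ} (s : Setoid (Fin d)) (c : Quotient s) : Set (Fin d) :=
  {y | Quotient.mk s y = c}

/-- Number of blocks of the restriction `s|_C` of a partition to a subset `C`. -/
noncomputable def blocksIn {d : ℕ} (s : Setoid (Fin d)) (C : Set (Fin d)) : ℚ :=
  Nat.card (Quotient (Setoid.comap (Subtype.val : C → Fin d) s))

/-- The colength `|(𝒜|_C, α|_C)| = 2(#C - #blocks) - (#C - #cycles)` of the restriction
of a partitioned permutation to a subset `C`. -/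
noncomputable def colRestr {d : ℕ} (s : Setoid (Fin d)) (σ : Equiv.Perm (Fin d))
    (C : Set (Fin d)) : ℚ :=
  2 * ((Nat.card C : ℚ) - blocksIn s C) - ((Nat.card C : ℚ) - blocksIn (cycleSetoid σ) C)

/-- The total genus `Σ_{A ∈ 𝒜, A ⊆ C} g(A)` of the blocks of `𝒜` contained in `C`. -/
noncomputable def genusSum {d : ℕ} (s : Setoid (Fin d)) (g : Quotient s → ℚ)
    (C : Set (Fin d)) : ℚ :=
  open scoped Classical in
  ∑ᶠ c : Quotient s, if blockOf s c ⊆ C then g c else 0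

/-- The colength `|(𝒜|_C, α|_C, g|_C)| = |(𝒜|_C, α|_C)| + Σ_{A ⊆ C} 2 g(A)` of the
restriction of a surfaced permutation to a subset `C`. -/
noncomputable def surfColRestr {d : ℕ} (s : Setoid (Fin d)) (σ : Equiv.Perm (Fin d))
    (g : Quotient s → ℚ) (C : Set (Fin d)) : ℚ :=
  colRestr s σ C + 2 * genusSum s g C

section SetoidBasics
variable {X : Type*}

/-- the setoid identifying `a` and `b` only. -/
def pairS (a b : X) : Setoid X :=
  ⟨fun x y => x = y ∨ (x = a ∧ y = b) ∨ (x = b ∧ y = a),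
   ⟨fun _ => Or.inl rfl, by rintro x y (rfl | ⟨rfl, rfl⟩ | ⟨rfl, rfl⟩) <;> tauto,
    by intro x y z h1 h2
       rcases h1 with rfl | ⟨e1, e2⟩ | ⟨e1, e2⟩ <;> rcases h2 with rfl | ⟨f1, f2⟩ | ⟨f1, f2⟩ <;>
         subst_vars <;> tauto⟩⟩

lemma pairS_rel (a b : X) : (pairS a b) a b := Or.inr (Or.inl ⟨rfl, rfl⟩)

lemma pairS_le {s : Setoid X} {a b : X} (h : s a b) : pairS a b ≤ s := by
  rw [Setoid.le_def]
  rintro x y (rfl | ⟨rfl, rfl⟩ | ⟨rfl, rfl⟩)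
  · exact s.refl x
  · exact h
  · exact s.symm h

lemma sup_pairS_rel (s : Setoid X) (a b : X) (x y : X) :
    (s ⊔ pairS a b) x y ↔ (s x y ∨ (s x a ∧ s b y) ∨ (s x b ∧ s a y)) := by
  constructor
  · intro h
    let R : Setoid X := ⟨fun x y => s x y ∨ (s x a ∧ s b y) ∨ (s x b ∧ s a y),
      ⟨fun x => Or.inl (s.refl x),
       by rintro x y (h | ⟨h1, h2⟩ | ⟨h1, h2⟩)
          · exact Or.inl (s.symm h)
          · exact Or.inr (Or.inr ⟨s.symm h2, s.symm h1⟩)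
          · exact Or.inr (Or.inl ⟨s.symm h2, s.symm h1⟩),
       by rintro x y z (h | ⟨h1, h2⟩ | ⟨h1, h2⟩) (h' | ⟨h1', h2'⟩ | ⟨h1', h2'⟩)
          · exact Or.inl (s.trans h h')
          · exact Or.inr (Or.inl ⟨s.trans h h1', h2'⟩)
          · exact Or.inr (Or.inr ⟨s.trans h h1', h2'⟩)
          · exact Or.inr (Or.inl ⟨h1, s.trans h2 h'⟩)
          · exact Or.inr (Or.inl ⟨h1, h2'⟩)
          · exact Or.inl (s.trans h1 h2')
          · exact Or.inr (Or.inr ⟨h1, s.trans h2 h'⟩)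
          · exact Or.inl (s.trans h1 h2')
          · exact Or.inr (Or.inr ⟨h1, h2'⟩)⟩⟩
    have hle : s ⊔ pairS a b ≤ R := by
      apply sup_le
      · rw [Setoid.le_def]; exact fun h => Or.inl h
      · rw [Setoid.le_def]
        rintro x y (rfl | ⟨rfl, rfl⟩ | ⟨rfl, rfl⟩)
        · exact Or.inl (s.refl x)
        · exact Or.inr (Or.inl ⟨s.refl _, s.refl _⟩)
        · exact Or.inr (Or.inr ⟨s.refl _, s.refl _⟩)
    exact Setoid.le_def.mp hle h
  · have hs : s ≤ s ⊔ pairS a b := le_sup_left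
    have hp : (s ⊔ pairS a b) a b := Setoid.le_def.mp (le_sup_right (a := s)) (pairS_rel a b)
    set t := s ⊔ pairS a b with ht
    rintro (h | ⟨h1, h2⟩ | ⟨h1, h2⟩)
    · exact Setoid.le_def.mp hs h
    · exact t.trans (Setoid.le_def.mp hs h1) (t.trans hp (Setoid.le_def.mp hs h2))
    · exact t.trans (Setoid.le_def.mp hs h1) (t.trans (t.symm hp) (Setoid.le_def.mp hs h2))

lemma numBlocks_antitone [Finite X] {s t : Setoid X} (h : s ≤ t) :
    numBlocks t ≤ numBlocks s := by
  have : Finite (Quotient s) := Quotient.finite s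
  exact Nat.card_le_card_of_surjective
    (Quotient.map' id (fun x y hxy => Setoid.le_def.mp h hxy))
    (fun q => Quotient.inductionOn' q (fun x => ⟨Quotient.mk'' x, rfl⟩))

lemma numBlocks_sup_pairS [Finite X] {s : Setoid X} {a b : X} (hab : ¬ s a b) :
    numBlocks (s ⊔ pairS a b) + 1 = numBlocks s := by
  classical
  have hfin : Finite (Quotient s) := Quotient.finite s
  have hfin2 : Finite (Quotient (s ⊔ pairS a b)) := Quotient.finite _
  -- map from classes of `s` other than that of `b` to classes of the sup, bijective
  let φ : Quotient s → Quotient (s ⊔ pairS a b) :=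
    Quotient.map' id (fun x y hxy => Setoid.le_def.mp (le_sup_left (b := pairS a b)) hxy)
  have key : Function.Bijective (fun q : {q : Quotient s // q ≠ Quotient.mk s b} => φ q.1) := by
    constructor
    · rintro ⟨q1, h1⟩ ⟨q2, h2⟩ hq
      induction q1 using Quotient.inductionOn' with | h x =>
      induction q2 using Quotient.inductionOn' with | h y =>
      simp only [φ, Quotient.map'_mk''] at hq
      have : (s ⊔ pairS a b) x y := Quotient.eq''.mp hq
      rw [sup_pairS_rel] at this
      rcases this with h | ⟨hx, hy⟩ | ⟨hx, hy⟩
      · exact Subtype.ext (Quotient.sound' h)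
      · exact absurd (Quotient.sound' (s.symm hy) : Quotient.mk s y = _) h2
      · exact absurd (Quotient.sound' hx : Quotient.mk s x = _) h1
    · intro q
      induction q using Quotient.inductionOn' with | h z =>
      by_cases hz : s b z
      · refine ⟨⟨Quotient.mk s a, ?_⟩, ?_⟩
        · intro hq
          exact hab (Quotient.exact' hq)
        · simp only [φ, Quotient.map'_mk'']
          exact Quotient.sound' (by rw [sup_pairS_rel]; exact Or.inr (Or.inl ⟨s.refl a, hz⟩))
      · refine ⟨⟨Quotient.mk s z, ?_⟩, rfl⟩
        intro hq
        exact hz (s.symm (Quotient.eq''.mp hq))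
  have h1 : Nat.card {q : Quotient s // q ≠ Quotient.mk s b} = numBlocks (s ⊔ pairS a b) :=
    Nat.card_eq_of_bijective _ key
  have h2 : Nat.card {q : Quotient s // q ≠ Quotient.mk s b} + 1 = numBlocks s := by
    have hft : Fintype (Quotient s) := Fintype.ofFinite _
    have e1 : Nat.card {q : Quotient s // q ≠ Quotient.mk s b}
        = Fintype.card {q : Quotient s // ¬ q = Quotient.mk s b} := Nat.card_eq_fintype_card
    have e2 : Fintype.card {q : Quotient s // ¬ q = Quotient.mk s b}
        = Fintype.card (Quotient s) - Fintype.card {q : Quotient s // q = Quotient.mk s b} :=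
      Fintype.card_subtype_compl _
    have e3 : Fintype.card {q : Quotient s // q = Quotient.mk s b} = 1 :=
      Fintype.card_subtype_eq _
    have e4 : numBlocks s = Fintype.card (Quotient s) := Nat.card_eq_fintype_card
    have e5 : 0 < Fintype.card (Quotient s) := Fintype.card_pos_iff.mpr ⟨Quotient.mk s b⟩
    omega
  omega
lemma numBlocks_sup_pairS_ge [Finite X] (s : Setoid X) (a b : X) :
    numBlocks s ≤ numBlocks (s ⊔ pairS a b) + 1 := by
  by_cases hab : s a b
  · rw [sup_eq_left.mpr (pairS_le hab)]; omega
  · rw [numBlocks_sup_pairS hab]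
  
end SetoidBasics

section CycleSetoid
variable {X : Type*}

lemma cycleSetoid_le {ρ : Perm X} {s : Setoid X} (h : ∀ z, s z (ρ z)) :
    cycleSetoid ρ ≤ s := by
  rw [Setoid.le_def]
  rintro x y ⟨i, hi⟩
  subst hi
  have key : ∀ i : ℤ, s x ((ρ ^ i) x) := by
    intro i
    induction i using Int.induction_on with
    | zero => simpa using s.refl x
    | succ n ih =>
        have : (ρ ^ ((n : ℤ) + 1)) x = ρ ((ρ ^ (n : ℤ)) x) := by
          rw [add_comm, zpow_add, zpow_one]; rfl
        rw [this]
        exact s.trans ih (h _)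
    | pred n ih =>
        have : (ρ ^ (-(n : ℤ) - 1)) x = ρ⁻¹ ((ρ ^ (-(n : ℤ))) x) := by
          rw [sub_eq_add_neg, add_comm, zpow_add, zpow_neg, zpow_one]; rfl
        rw [this]
        refine s.trans ih ?_
        have := h (ρ⁻¹ ((ρ ^ (-(n : ℤ))) x))
        rw [show ρ (ρ⁻¹ ((ρ ^ (-(n : ℤ))) x)) = (ρ ^ (-(n : ℤ))) x from ρ.apply_symm_apply _] at this
        exact s.symm this
  exact key i

lemma cycleSetoid_one : cycleSetoid (1 : Perm X) = ⊥ := by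
  refine le_antisymm ?_ ?_
  · rw [Setoid.le_def]
    rintro x y ⟨i, hi⟩
    simp only [one_zpow, Perm.one_apply] at hi
    show (⊥ : Setoid X) x y
    rw [Setoid.bot_def]
    exact hi
  · rw [Setoid.le_def]
    intro x y h
    rw [show (⊥ : Setoid X) x y ↔ x = y from iff_of_eq (congrFun (congrFun Setoid.bot_def x) y)] at h
    exact h ▸ (cycleSetoid 1).refl x

lemma cycleSetoid_mul_le (σ τ : Perm X) :
    cycleSetoid (σ * τ) ≤ cycleSetoid σ ⊔ cycleSetoid τ := by
  apply cycleSetoid_le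
  intro z
  have h1 : (cycleSetoid σ ⊔ cycleSetoid τ) z (τ z) :=
    Setoid.le_def.mp le_sup_right ⟨1, rfl⟩
  have h2 : (cycleSetoid σ ⊔ cycleSetoid τ) (τ z) (σ (τ z)) :=
    Setoid.le_def.mp le_sup_left ⟨1, rfl⟩
  exact Setoid.trans' _ h1 h2
end CycleSetoid

section Trace
variable {X : Type*} [DecidableEq X]

lemma trace_pow (σ : Perm X) (a b : X) (j : ℕ)
    (hj : ∀ i, 0 < i → i ≤ j → (σ ^ i) a ≠ a ∧ (σ ^ i) a ≠ b) :
    ((swap a b * σ) ^ j) a = (σ ^ j) a := by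
  induction j with
  | zero => rfl
  | succ n ih =>
      have ih' := ih (fun i hi hij => hj i hi (Nat.le_succ_of_le hij))
      have h1 : ((swap a b * σ) ^ (n + 1)) a = (swap a b * σ) (((swap a b * σ) ^ n) a) := by
        rw [pow_succ']; rfl
      have h2 : (σ ^ (n + 1)) a = σ ((σ ^ n) a) := by rw [pow_succ']; rfl
      rw [h1, ih', h2]
      have := hj (n + 1) (Nat.succ_pos n) le_rfl
      rw [h2] at this
      show swap a b (σ ((σ ^ n) a)) = σ ((σ ^ n) a)
      exact swap_apply_of_ne_of_ne this.1 this.2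

variable [Finite X]

lemma toggle1 {σ : Perm X} {a b : X} (hab : a ≠ b) (h : ¬ σ.SameCycle a b) :
    (swap a b * σ).SameCycle a b := by
  have hex : ∃ k, 0 < k ∧ (σ ^ k) a = a :=
    ⟨orderOf σ, orderOf_pos σ, by rw [pow_orderOf_eq_one]; rfl⟩
  classical
  set k := Nat.find hex with hk
  obtain ⟨kpos, hka⟩ := Nat.find_spec hex
  have hmin : ∀ j, 0 < j → j < k → (σ ^ j) a ≠ a := by
    intro j hj hjk hja
    exact (Nat.find_min hex hjk) ⟨hj, hja⟩
  have hnb : ∀ j, (σ ^ j) a ≠ b := by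
    intro j hja
    exact h ⟨(j : ℤ), by rw [zpow_natCast]; exact hja⟩
  have htr : ((swap a b * σ) ^ (k - 1)) a = (σ ^ (k - 1)) a :=
    trace_pow σ a b (k - 1) (fun i hi hik => ⟨hmin i hi (by omega), hnb i⟩)
  refine ⟨(k : ℤ), ?_⟩
  rw [zpow_natCast]
  have hk1 : k = (k - 1) + 1 := by omega
  rw [hk1, pow_succ']
  show (swap a b * σ) (((swap a b * σ) ^ (k - 1)) a) = b
  rw [htr]
  show swap a b (σ ((σ ^ (k - 1)) a)) = b
  have : σ ((σ ^ (k - 1)) a) = (σ ^ k) a := by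
    conv_rhs => rw [hk1]
    rw [pow_succ']; rfl
  rw [this, hka, swap_apply_left]

lemma toggle2 {σ : Perm X} {a b : X} (hab : a ≠ b) (h : σ.SameCycle a b) :
    ¬ (swap a b * σ).SameCycle a b := by
  classical
  have hex : ∃ m, 0 < m ∧ (σ ^ m) a = b := by
    obtain ⟨i, _, hi⟩ := h.exists_pow_eq'
    refine ⟨i, ?_, hi⟩
    rcases Nat.eq_zero_or_pos i with rfl | hp
    · exact absurd hi hab
    · exact hp
  set m := Nat.find hex with hm
  obtain ⟨mpos, hmb⟩ := Nat.find_spec hex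
  have hminb : ∀ j, j < m → (σ ^ j) a ≠ b := by
    intro j hj hja
    rcases Nat.eq_zero_or_pos j with rfl | hp
    · exact hab hja
    · exact (Nat.find_min hex hj) ⟨hp, hja⟩
  have hmina : ∀ j, 0 < j → j < m → (σ ^ j) a ≠ a := by
    intro j hj hjm hja
    have : (σ ^ (m - j)) ((σ ^ j) a) = (σ ^ m) a := by
      rw [← Equiv.Perm.mul_apply, ← pow_add, Nat.sub_add_cancel (le_of_lt hjm)]
    rw [hja, hmb] at this
    exact hminb (m - j) (by omega) this
  have htr : ∀ j, j ≤ m - 1 → ((swap a b * σ) ^ j) a = (σ ^ j) a := by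
    intro j hj
    exact trace_pow σ a b j (fun i hi hij =>
      ⟨hmina i hi (by omega), hminb i (by omega)⟩)
  have hper : ((swap a b * σ) ^ m) a = a := by
    have hm1 : m = (m - 1) + 1 := by omega
    rw [hm1, pow_succ']
    show (swap a b * σ) (((swap a b * σ) ^ (m - 1)) a) = a
    rw [htr (m - 1) le_rfl]
    show swap a b (σ ((σ ^ (m - 1)) a)) = a
    have : σ ((σ ^ (m - 1)) a) = (σ ^ m) a := by
      conv_rhs => rw [hm1]
      rw [pow_succ']; rfl
    rw [this, hmb, swap_apply_right]
  have hnotb : ∀ j, j < m → ((swap a b * σ) ^ j) a ≠ b := by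
    intro j hj
    rcases Nat.eq_zero_or_pos j with rfl | hp
    · exact hab
    · rw [htr j (by omega)]
      exact hminb j hj
  intro hsc
  obtain ⟨i, _, hi⟩ := hsc.exists_pow_eq'
  have hred : ∀ q r, (((swap a b * σ) ^ (r + m * q)) a) = ((swap a b * σ) ^ r) a := by
    intro q
    induction q with
    | zero => simp
    | succ n ih =>
        intro r
        have : r + m * (n + 1) = (r + m * n) + m := by ring
        rw [this, pow_add, Equiv.Perm.mul_apply, hper]
        exact ih r
  have : ((swap a b * σ) ^ (i % m)) a = b := by
    have := hred (i / m) (i % m)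
    rw [Nat.mod_add_div] at this
    rw [← this, hi]
  exact hnotb (i % m) (Nat.mod_lt _ mpos) this

end Trace


section CountLemmas
variable {X : Type*} [DecidableEq X] [Finite X]

lemma mex {σ : Perm X} {a b : X} (hab : a ≠ b) (h : ¬ σ.SameCycle a b) :
    numCycles (swap a b * σ) + 1 = numCycles σ ∧
      cycleSetoid (swap a b * σ) = cycleSetoid σ ⊔ pairS a b := by
  have t1 : (swap a b * σ).SameCycle a b := toggle1 hab h
  have hpair : pairS a b ≤ cycleSetoid (swap a b * σ) := pairS_le t1
  have h1 : cycleSetoid (swap a b * σ) ≤ cycleSetoid σ ⊔ pairS a b := by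
    apply cycleSetoid_le
    intro z
    have hz : (cycleSetoid σ ⊔ pairS a b) z (σ z) := Setoid.le_def.mp le_sup_left ⟨1, rfl⟩
    refine Setoid.trans' _ hz ?_
    rcases eq_or_ne (σ z) a with he | hea
    · rw [show (swap a b * σ) z = b by simp [he]]
      rw [he]
      exact Setoid.le_def.mp le_sup_right (pairS_rel a b)
    rcases eq_or_ne (σ z) b with he | heb
    · rw [show (swap a b * σ) z = a by simp [he]]
      rw [he]
      exact Setoid.symm' _ (Setoid.le_def.mp le_sup_right (pairS_rel a b))
    · rw [show (swap a b * σ) z = σ z by simp [swap_apply_of_ne_of_ne hea heb]]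
  have h2 : cycleSetoid σ ≤ cycleSetoid (swap a b * σ) := by
    have h3 : cycleSetoid (swap a b * (swap a b * σ)) ≤
        cycleSetoid (swap a b * σ) ⊔ pairS a b := by
      apply cycleSetoid_le
      intro z
      have hz : (cycleSetoid (swap a b * σ) ⊔ pairS a b) z ((swap a b * σ) z) :=
        Setoid.le_def.mp le_sup_left ⟨1, rfl⟩
      refine Setoid.trans' _ hz ?_
      rcases eq_or_ne ((swap a b * σ) z) a with he | hea
      · rw [show (swap a b * (swap a b * σ)) z = b by
          rw [Equiv.Perm.mul_apply, he, swap_apply_left]]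
        rw [he]
        exact Setoid.le_def.mp le_sup_right (pairS_rel a b)
      rcases eq_or_ne ((swap a b * σ) z) b with he | heb
      · rw [show (swap a b * (swap a b * σ)) z = a by
          rw [Equiv.Perm.mul_apply, he, swap_apply_right]]
        rw [he]
        exact Setoid.symm' _ (Setoid.le_def.mp le_sup_right (pairS_rel a b))
      · rw [show (swap a b * (swap a b * σ)) z = (swap a b * σ) z by
          rw [Equiv.Perm.mul_apply, swap_apply_of_ne_of_ne hea heb]]
    rw [Equiv.swap_mul_self_mul] at h3
    exact le_trans h3 (sup_le le_rfl hpair)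
  have hSeq : cycleSetoid (swap a b * σ) = cycleSetoid σ ⊔ pairS a b :=
    le_antisymm h1 (sup_le h2 hpair)
  constructor
  · show numBlocks _ + 1 = numBlocks _
    rw [hSeq]
    exact numBlocks_sup_pairS h
  · exact hSeq

lemma cs_rev_le (σ : Perm X) (a b : X) :
    cycleSetoid σ ≤ cycleSetoid (swap a b * σ) ⊔ pairS a b := by
  apply cycleSetoid_le
  intro z
  have hz : (cycleSetoid (swap a b * σ) ⊔ pairS a b) z ((swap a b * σ) z) :=
    Setoid.le_def.mp le_sup_left ⟨1, rfl⟩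
  refine Setoid.trans' _ hz ?_
  rcases eq_or_ne ((swap a b * σ) z) a with he | hea
  · have hz2 : σ z = b := by
      have := congrArg (swap a b) he
      rw [← Equiv.Perm.mul_apply, Equiv.swap_mul_self_mul, swap_apply_left] at this
      exact this
    rw [he, hz2]
    exact Setoid.le_def.mp le_sup_right (pairS_rel a b)
  rcases eq_or_ne ((swap a b * σ) z) b with he | heb
  · have hz2 : σ z = a := by
      have := congrArg (swap a b) he
      rw [← Equiv.Perm.mul_apply, Equiv.swap_mul_self_mul, swap_apply_right] at this
      exact this
    rw [he, hz2]
    exact Setoid.symm' _ (Setoid.le_def.mp le_sup_right (pairS_rel a b))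
  · have hz2 : σ z = (swap a b * σ) z := by
      rw [show (swap a b * σ) z = swap a b (σ z) from rfl]
      rw [swap_apply_of_ne_of_ne] <;> intro hc
      · rw [show (swap a b * σ) z = swap a b (σ z) from rfl, hc, swap_apply_left] at heb
        exact heb rfl
      · rw [show (swap a b * σ) z = swap a b (σ z) from rfl, hc, swap_apply_right] at hea
        exact hea rfl
    rw [hz2]

lemma p1 (σ : Perm X) (a b : X) :
    numCycles (swap a b * σ) ≤ numCycles σ + 1 := by
  have h1 : cycleSetoid σ ≤ cycleSetoid (swap a b * σ) ⊔ pairS a b := cs_rev_le σ a b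
  have h2 : numBlocks (cycleSetoid (swap a b * σ) ⊔ pairS a b) ≤ numCycles σ :=
    numBlocks_antitone h1
  have h3 := numBlocks_sup_pairS_ge (cycleSetoid (swap a b * σ)) a b
  show numBlocks _ ≤ _
  omega

lemma ex1 {σ : Perm X} {a b : X} (hab : a ≠ b) :
    numCycles (swap a b * σ) = numCycles σ + 1 ∨
      numCycles (swap a b * σ) + 1 = numCycles σ := by
  by_cases h : σ.SameCycle a b
  · left
    have h2 := toggle2 hab h
    have := (mex hab h2).1
    rw [Equiv.swap_mul_self_mul] at this
    omega
  · right
    exact (mex hab h).1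

lemma numBlocks_bot : numBlocks (⊥ : Setoid X) = Nat.card X := by
  symm
  apply Nat.card_eq_of_bijective (Quotient.mk ⊥)
  constructor
  · intro x y hxy
    have := Quotient.exact' hxy
    rwa [show (⊥ : Setoid X) x y ↔ x = y from
      iff_of_eq (congrFun (congrFun Setoid.bot_def x) y)] at this
  · intro q
    exact Quotient.inductionOn' q (fun x => ⟨x, rfl⟩)

lemma numCycles_one : numCycles (1 : Perm X) = Nat.card X := by
  show numBlocks _ = _
  rw [cycleSetoid_one, numBlocks_bot]

end CountLemmas

section MainInduction
variable {X : Type*} [DecidableEq X] [Fintype X]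

lemma key0_one (β : Perm X) :
    numCycles (1 : Perm X) + numBlocks (cycleSetoid β) + numBlocks (cycleSetoid ((1 : Perm X) * β))
      ≤ Fintype.card X + 2 * numBlocks (cycleSetoid (1 : Perm X) ⊔ cycleSetoid β) := by
  rw [numCycles_one, Nat.card_eq_fintype_card, one_mul, cycleSetoid_one, bot_sup_eq]
  omega

lemma key0_aux : ∀ (N : ℕ) (α β : Perm X), α.support.card ≤ N →
    numCycles α + numCycles β + numCycles (α * β)
      ≤ Fintype.card X + 2 * numBlocks (cycleSetoid α ⊔ cycleSetoid β) := by
  intro N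
  induction N with
  | zero =>
      intro α β hN
      have : α.support = ∅ := Finset.card_eq_zero.mp (Nat.le_zero.mp hN)
      rw [Equiv.Perm.support_eq_empty_iff] at this
      subst this
      exact key0_one β
  | succ N ih =>
      intro α β hN
      by_cases hα : α = 1
      · subst hα; exact key0_one β
      have ha : ∃ a, α a ≠ a := by
        by_contra h'
        push_neg at h'
        exact hα (Equiv.ext h')
      obtain ⟨a, ha⟩ := ha
      set b := α a with hb
      have hab : a ≠ b := fun h => ha h.symm
      set α' := swap a b * α with hα'
      have hsupp : α'.support.card < α.support.card := Equiv.Perm.card_support_swap_mul ha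
      have hSc : α.SameCycle a b := ⟨1, by simp [hb]⟩
      have hnot : ¬ α'.SameCycle a b := toggle2 hab hSc
      have hswap : swap a b * α' = α := Equiv.swap_mul_self_mul a b α
      obtain ⟨hcount, hSeq⟩ := mex hab hnot
      rw [hswap] at hcount hSeq
      -- hcount : numCycles α + 1 = numCycles α'
      -- hSeq : cycleSetoid α = cycleSetoid α' ⊔ pairS a b
      have hIH := ih α' β (by omega)
      have hprod : α * β = swap a b * (α' * β) := by
        rw [← hswap, mul_assoc]
      by_cases hc2 : (α' * β).SameCycle a b
      · have hpairle : pairS a b ≤ cycleSetoid α' ⊔ cycleSetoid β :=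
          le_trans (pairS_le hc2) (cycleSetoid_mul_le α' β)
        have hteq : cycleSetoid α ⊔ cycleSetoid β = cycleSetoid α' ⊔ cycleSetoid β := by
          rw [hSeq, sup_right_comm, sup_eq_left.mpr hpairle]
        have hP1 : numCycles (α * β) ≤ numCycles (α' * β) + 1 := by
          rw [hprod]; exact p1 _ a b
        rw [hteq]
        omega
      · obtain ⟨hcount2, _⟩ := mex hab hc2
        have hcount2' : numCycles (α * β) + 1 = numCycles (α' * β) := by
          rw [hprod]; exact hcount2
        have hteq : cycleSetoid α ⊔ cycleSetoid β
            = (cycleSetoid α' ⊔ cycleSetoid β) ⊔ pairS a b := by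
          rw [hSeq, sup_right_comm]
        have hge := numBlocks_sup_pairS_ge (cycleSetoid α' ⊔ cycleSetoid β) a b
        rw [hteq]
        have hge2 := numBlocks_antitone
          (le_sup_left : cycleSetoid α' ⊔ cycleSetoid β ≤ (cycleSetoid α' ⊔ cycleSetoid β) ⊔ pairS a b)
        omega

lemma key1_aux : ∀ (M : ℕ) (α β : Perm X) (SA SB : Setoid X),
    cycleSetoid α ≤ SA → cycleSetoid β ≤ SB → numCycles α + numCycles β ≤ M →
    2 * numBlocks SA + 2 * numBlocks SB + numCycles (α * β)
      ≤ Fintype.card X + 2 * numBlocks (SA ⊔ SB) + numCycles α + numCycles β := by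
  intro M
  induction M with
  | zero =>
      intro α β SA SB _ _ hM
      have hcα : numCycles α = 0 := by omega
      have : IsEmpty (Quotient (cycleSetoid α)) := by
        have : Finite (Quotient (cycleSetoid α)) := Quotient.finite _
        rcases Nat.card_eq_zero.mp hcα with h | h
        · exact h
        · exact absurd h (not_infinite_iff_finite.mpr this)
      have hX : IsEmpty X := ⟨fun x => this.false (Quotient.mk _ x)⟩
      have h0 : ∀ s : Setoid X, numBlocks s = 0 := by
        intro s
        have : IsEmpty (Quotient s) := ⟨fun q => Quotient.inductionOn' q (fun x => hX.false x)⟩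
        simp [numBlocks, Nat.card_eq_zero, this]
      rw [h0, h0, h0, show numCycles (α * β) = 0 from h0 _, Fintype.card_eq_zero]
      omega
  | succ M ih =>
      intro α β SA SB hSA hSB hM
      by_cases hA : ∃ a b, SA a b ∧ ¬ α.SameCycle a b
      · obtain ⟨a, b, hab1, hab2⟩ := hA
        have hab : a ≠ b := fun h => hab2 (h ▸ Equiv.Perm.SameCycle.refl α a)
        obtain ⟨hcount, hSeq⟩ := mex hab hab2
        have hle : cycleSetoid (swap a b * α) ≤ SA := by
          rw [hSeq]
          exact sup_le hSA (pairS_le hab1)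
        have hIH := ih (swap a b * α) β SA SB hle hSB (by omega)
        have hprod : α * β = swap a b * ((swap a b * α) * β) := by
          rw [← mul_assoc, Equiv.swap_mul_self_mul]
        have hP1 : numCycles (α * β) ≤ numCycles ((swap a b * α) * β) + 1 := by
          rw [hprod]; exact p1 _ a b
        omega
      by_cases hB : ∃ a b, SB a b ∧ ¬ β.SameCycle a b
      · obtain ⟨a, b, hab1, hab2⟩ := hB
        have hab : a ≠ b := fun h => hab2 (h ▸ Equiv.Perm.SameCycle.refl β a)
        obtain ⟨hcount, hSeq⟩ := mex hab hab2
        have hle : cycleSetoid (swap a b * β) ≤ SB := by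
          rw [hSeq]
          exact sup_le hSB (pairS_le hab1)
        have hIH := ih α (swap a b * β) SA SB hSA hle (by omega)
        have hprod : α * β = swap (α a) (α b) * (α * (swap a b * β)) := by
          calc α * β = α * (swap a b * (swap a b * β)) := by rw [Equiv.swap_mul_self_mul]
            _ = (α * swap a b) * (swap a b * β) := by rw [mul_assoc]
            _ = (swap (α a) (α b) * α) * (swap a b * β) := by rw [Equiv.mul_swap_eq_swap_mul]
            _ = swap (α a) (α b) * (α * (swap a b * β)) := by rw [mul_assoc]
        have hP1 : numCycles (α * β) ≤ numCycles (α * (swap a b * β)) + 1 := by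
          rw [hprod]; exact p1 _ (α a) (α b)
        omega
      · push_neg at hA hB
        have hSAeq : SA = cycleSetoid α :=
          le_antisymm (Setoid.le_def.mpr (fun {x y} h => hA x y h)) hSA
        have hSBeq : SB = cycleSetoid β :=
          le_antisymm (Setoid.le_def.mpr (fun {x y} h => hB x y h)) hSB
        subst hSAeq hSBeq
        have h0 := key0_aux (α.support.card) α β le_rfl
        show 2 * numCycles α + 2 * numCycles β + numCycles (α * β) ≤ _
        omega

lemma parity_aux : ∀ (N : ℕ) (α β : Perm X), α.support.card ≤ N →
    Even (Fintype.card X + numCycles α + numCycles β + numCycles (α * β)) := by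
  intro N
  induction N with
  | zero =>
      intro α β hN
      have : α.support = ∅ := Finset.card_eq_zero.mp (Nat.le_zero.mp hN)
      rw [Equiv.Perm.support_eq_empty_iff] at this
      subst this
      rw [numCycles_one, Nat.card_eq_fintype_card, one_mul]
      exact ⟨Fintype.card X + numCycles β, by ring⟩
  | succ N ih =>
      intro α β hN
      by_cases hα : α = 1
      · subst hα
        rw [numCycles_one, Nat.card_eq_fintype_card, one_mul]
        exact ⟨Fintype.card X + numCycles β, by ring⟩
      have ha : ∃ a, α a ≠ a := by
        by_contra h'
        push_neg at h'
        exact hα (Equiv.ext h')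
      obtain ⟨a, ha⟩ := ha
      set b := α a with hb
      have hab : a ≠ b := fun h => ha h.symm
      set α' := swap a b * α with hα'
      have hsupp : α'.support.card < α.support.card := Equiv.Perm.card_support_swap_mul ha
      have hSc : α.SameCycle a b := ⟨1, by simp [hb]⟩
      have hnot : ¬ α'.SameCycle a b := toggle2 hab hSc
      have hswap : swap a b * α' = α := Equiv.swap_mul_self_mul a b α
      have hcount : numCycles α + 1 = numCycles α' := by
        have := (mex hab hnot).1
        rwa [hswap] at this
      have hprod : α * β = swap a b * (α' * β) := by rw [← hswap, mul_assoc]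
      obtain ⟨r, hr⟩ := ih α' β (by omega)
      have hex := ex1 (σ := α' * β) hab
      rw [← hprod] at hex
      rcases hex with h | h
      · exact ⟨r, by omega⟩
      · have hr1 : 1 ≤ r := by omega
        exact ⟨r - 1, by omega⟩

end MainInduction



section Plumbing
variable {X : Type*}

lemma numBlocks_top [Nonempty X] : numBlocks (⊤ : Setoid X) = 1 := by
  have hsub : Subsingleton (Quotient (⊤ : Setoid X)) := by
    constructor
    intro q1 q2
    induction q1 using Quotient.inductionOn' with | h x =>
    induction q2 using Quotient.inductionOn' with | h y =>
    exact Quotient.sound' trivial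
  have hne : Nonempty (Quotient (⊤ : Setoid X)) := Nonempty.map (Quotient.mk _) ‹_›
  rw [numBlocks, Nat.card_eq_one_iff_unique]
  exact ⟨hsub, hne⟩

lemma cycleSetoid_subtypePerm {p : X → Prop} (σ : Equiv.Perm X) (h : ∀ x, p (σ x) ↔ p x) :
    cycleSetoid (σ.subtypePerm h) = Setoid.comap (Subtype.val) (cycleSetoid σ) := by
  apply Setoid.ext
  intro x y
  constructor
  · rintro ⟨i, hi⟩
    refine ⟨i, ?_⟩
    rw [Equiv.Perm.subtypePerm_zpow] at hi
    have := congrArg Subtype.val hi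
    rwa [Equiv.Perm.subtypePerm_apply] at this
  · rintro ⟨i, hi⟩
    refine ⟨i, ?_⟩
    rw [Equiv.Perm.subtypePerm_zpow, Equiv.Perm.subtypePerm_apply]
    exact Subtype.ext hi

lemma comap_le_comap {Y : Type*} (f : Y → X) {s t : Setoid X} (h : s ≤ t) :
    Setoid.comap f s ≤ Setoid.comap f t := by
  rw [Setoid.le_def]
  intro x y hxy
  exact Setoid.le_def.mp h hxy

end Plumbing

section FinalAssembly

variable {d : ℕ} {A B : PartPerm d}

/-- The main numeric inequality and parity, per block. -/
lemma block_numeric (c : Quotient (A.part ⊔ B.part)) :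
    ∃ m : ℕ,
      (Nat.card (blockOf (A.part ⊔ B.part) c) + 2
        + blocksIn (cycleSetoid A.perm) (blockOf (A.part ⊔ B.part) c)
        + blocksIn (cycleSetoid B.perm) (blockOf (A.part ⊔ B.part) c))
      = 2 * blocksIn A.part (blockOf (A.part ⊔ B.part) c)
        + 2 * blocksIn B.part (blockOf (A.part ⊔ B.part) c)
        + blocksIn (cycleSetoid (A.perm * B.perm)) (blockOf (A.part ⊔ B.part) c)
        + 2 * m
      ∧ blocksIn (A.part ⊔ B.part) (blockOf (A.part ⊔ B.part) c) = 1 := by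
  classical
  set C := blockOf (A.part ⊔ B.part) c with hC
  -- basic facts about the block C
  have hmem : ∀ x : Fin d, x ∈ C ↔ Quotient.mk (A.part ⊔ B.part) x = c := fun x => Iff.rfl
  obtain ⟨z, hz⟩ := Quotient.exists_rep c
  have hzC : z ∈ C := by rw [hmem]; exact hz
  have hCne : Nonempty C := ⟨⟨z, hzC⟩⟩
  have hsat : ∀ x y : Fin d, x ∈ C → (A.part ⊔ B.part) x y → y ∈ C := by
    intro x y hx hxy
    rw [hmem] at hx ⊢
    rw [← hx]
    exact (Quotient.sound' (Setoid.symm' _ hxy))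
  -- invariance of C under the three permutations
  have hcsA : cycleSetoid A.perm ≤ A.part ⊔ B.part := by
    refine le_trans ?_ (le_sup_left : A.part ≤ _)
    rw [Setoid.le_def]; exact fun {x y} h => A.refines x y h
  have hcsB : cycleSetoid B.perm ≤ A.part ⊔ B.part := by
    refine le_trans ?_ (le_sup_right : B.part ≤ _)
    rw [Setoid.le_def]; exact fun {x y} h => B.refines x y h
  have hinvA : ∀ x, x ∈ C ↔ A.perm x ∈ C := by
    intro x
    have h1 : (A.part ⊔ B.part) x (A.perm x) := Setoid.le_def.mp hcsA ⟨1, rfl⟩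
    exact ⟨fun hx => hsat _ _ hx h1, fun hx => hsat _ _ hx (Setoid.symm' _ h1)⟩
  have hinvB : ∀ x, x ∈ C ↔ B.perm x ∈ C := by
    intro x
    have h1 : (A.part ⊔ B.part) x (B.perm x) := Setoid.le_def.mp hcsB ⟨1, rfl⟩
    exact ⟨fun hx => hsat _ _ hx h1, fun hx => hsat _ _ hx (Setoid.symm' _ h1)⟩
  -- restricted permutations
  set αr : Equiv.Perm C := A.perm.subtypePerm (fun x => (hinvA x).symm) with hαr
  set βr : Equiv.Perm C := B.perm.subtypePerm (fun x => (hinvB x).symm) with hβr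
  have hmulr : αr * βr = (A.perm * B.perm).subtypePerm
      (fun x => (show (A.perm * B.perm) x ∈ C ↔ x ∈ C from ((hinvB x).trans (hinvA (B.perm x))).symm)) := by
    rw [hαr, hβr, Equiv.Perm.subtypePerm_mul]
  -- identification of the blocksIn quantities
  haveI : Fintype C := Fintype.ofFinite _
  have bc1 : blocksIn (cycleSetoid A.perm) C = (numCycles αr : ℚ) := by
    rw [blocksIn, hαr, numCycles, numBlocks, cycleSetoid_subtypePerm]
  have bc2 : blocksIn (cycleSetoid B.perm) C = (numCycles βr : ℚ) := by
    rw [blocksIn, hβr, numCycles, numBlocks, cycleSetoid_subtypePerm]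
  have bc3 : blocksIn (cycleSetoid (A.perm * B.perm)) C = (numCycles (αr * βr) : ℚ) := by
    rw [blocksIn, hmulr, numCycles, numBlocks, cycleSetoid_subtypePerm]
  have bcA : blocksIn A.part C
      = (numBlocks (Setoid.comap (Subtype.val : C → Fin d) A.part) : ℚ) := rfl
  have bcB : blocksIn B.part C
      = (numBlocks (Setoid.comap (Subtype.val : C → Fin d) B.part) : ℚ) := rfl
  -- the sup of the comaps is ⊤
  have hsup : Setoid.comap (Subtype.val : C → Fin d) A.part
      ⊔ Setoid.comap (Subtype.val : C → Fin d) B.part = ⊤ := by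
    rw [eq_top_iff, Setoid.le_def]
    rintro ⟨x, hx⟩ ⟨y, hy⟩ -
    have hxy : (A.part ⊔ B.part) x y := by
      rw [hmem] at hx hy
      exact Quotient.exact' (hx.trans hy.symm)
    have htrans : ∀ u v : Fin d,
        Relation.EqvGen (fun x y => A.part x y ∨ B.part x y) u v →
        ∀ (hu : u ∈ C) (hv : v ∈ C),
          (Setoid.comap (Subtype.val : C → Fin d) A.part
            ⊔ Setoid.comap (Subtype.val : C → Fin d) B.part) ⟨u, hu⟩ ⟨v, hv⟩ := by
      intro u v huv
      induction huv with
      | rel u v h =>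
          intro hu hv
          rcases h with h | h
          · exact Setoid.le_def.mp le_sup_left h
          · exact Setoid.le_def.mp le_sup_right h
      | refl u => intro hu hv; exact Setoid.refl' _ _
      | symm u v h ih => intro hu hv; exact Setoid.symm' _ (ih hv hu)
      | trans u v w h1 h2 ih1 ih2 =>
          intro hu hw
          have hSuv : (A.part ⊔ B.part) u v := by
            rw [Setoid.sup_eq_eqvGen]
            exact h1
          have hv : v ∈ C := hsat _ _ hu hSuv
          exact Setoid.trans' _ (ih1 hu hv) (ih2 hv hw)
    have hxy' : Relation.EqvGen (fun x y => A.part x y ∨ B.part x y) x y := by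
      rw [Setoid.sup_eq_eqvGen] at hxy
      exact hxy
    exact htrans x y hxy' hx hy
  have htop1 : Nat.card (Quotient (⊤ : Setoid C)) = 1 := numBlocks_top
  have bcS : blocksIn (A.part ⊔ B.part) C = 1 := by
    have hcomap : Setoid.comap (Subtype.val : C → Fin d) (A.part ⊔ B.part) = ⊤ := by
      rw [eq_top_iff]
      refine le_trans (le_of_eq hsup.symm) (sup_le ?_ ?_)
      · exact comap_le_comap _ le_sup_left
      · exact comap_le_comap _ le_sup_right
    rw [blocksIn, hcomap, htop1]
    norm_num
  -- apply the main inequality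
  have hle1 : cycleSetoid αr ≤ Setoid.comap (Subtype.val : C → Fin d) A.part := by
    rw [hαr, cycleSetoid_subtypePerm]
    refine comap_le_comap _ ?_
    rw [Setoid.le_def]; exact fun {x y} h => A.refines x y h
  have hle2 : cycleSetoid βr ≤ Setoid.comap (Subtype.val : C → Fin d) B.part := by
    rw [hβr, cycleSetoid_subtypePerm]
    refine comap_le_comap _ ?_
    rw [Setoid.le_def]; exact fun {x y} h => B.refines x y h
  have hkey := key1_aux (numCycles αr + numCycles βr) αr βr
    (Setoid.comap (Subtype.val : C → Fin d) A.part)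
    (Setoid.comap (Subtype.val : C → Fin d) B.part) hle1 hle2 le_rfl
  rw [hsup] at hkey
  rw [show numBlocks (⊤ : Setoid C) = 1 from htop1] at hkey
  obtain ⟨r, hr⟩ := parity_aux (αr.support.card) αr βr le_rfl
  set n := Fintype.card C with hn
  set bA := numBlocks (Setoid.comap (Subtype.val : C → Fin d) A.part) with hbA
  set bB := numBlocks (Setoid.comap (Subtype.val : C → Fin d) B.part) with hbB
  set cA := numCycles αr with hcA
  set cB := numCycles βr with hcB
  set cAB := numCycles (αr * βr) with hcAB
  have hmex : ∃ m : ℕ, n + 2 + cA + cB = 2 * bA + 2 * bB + cAB + 2 * m := by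
    refine ⟨(r + 1) - cAB - bA - bB, ?_⟩
    omega
  obtain ⟨m, hm⟩ := hmex
  refine ⟨m, ?_, bcS⟩
  rw [bc1, bc2, bc3, bcA, bcB]
  have hcard : (Nat.card (C : Set (Fin d)) : ℚ) = (n : ℚ) := by
    rw [hn, Nat.card_eq_fintype_card]
  rw [hcard]
  have h2 := congrArg (fun x : ℕ => (x : ℚ)) hm
  push_cast at h2 ⊢
  linarith

end FinalAssembly


lemma genusSum_block {d : ℕ} (s : Setoid (Fin d)) (g : Quotient s → ℚ) (c : Quotient s) :
    genusSum s g (blockOf s c) = g c := by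
  classical
  rw [genusSum]
  have h := finsum_eq_single
    (fun c' : Quotient s => if blockOf s c' ⊆ blockOf s c then g c' else 0) c
    (by
      intro c' hc'
      have : ¬ blockOf s c' ⊆ blockOf s c := by
        intro hsub
        obtain ⟨x, hx⟩ := Quotient.exists_rep c'
        have hx1 : x ∈ blockOf s c' := hx
        have hx2 : x ∈ blockOf s c := hsub hx1
        exact hc' (hx1.symm.trans hx2)
      simp [this])
  rw [h]
  simp

/-- Block-additivity of colength for products of surfaced permutations: with the genus
function `k` of the product `(𝒜,α,g) ⊙ (ℬ,β,h)` defined on each block `C` of `𝒜 ∨ ℬ` by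
`k(C) = (|(𝒜|_C,α|_C,g|_C)| + |(ℬ|_C,β|_C,h|_C)| - |(𝒜∨ℬ|_C, αβ|_C)|)/2`, one has
`|(𝒜|_C,α|_C,g|_C)| + |(ℬ|_C,β|_C,h|_C)| = |(𝒞|_C, γ|_C, k|_C)|`, and moreover
`k(C) ≥ Σ_{A ⊆ C} g(A) + Σ_{B ⊆ C} h(B)` with the difference a nonnegative integer. -/
theorem surfaced_colength_block_additivity (d : ℕ) (A B : PartPerm d)
    (g : Quotient A.part → ℚ) (h : Quotient B.part → ℚ)
    (hg : ∀ c, ∃ m : ℕ, g c = (m : ℚ) / 2) (hh : ∀ c, ∃ m : ℕ, h c = (m : ℚ) / 2)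
    (k : Quotient (A.part ⊔ B.part) → ℚ)
    (hk : ∀ c, k c =
      (surfColRestr A.part A.perm g (blockOf (A.part ⊔ B.part) c)
        + surfColRestr B.part B.perm h (blockOf (A.part ⊔ B.part) c)
        - colRestr (A.part ⊔ B.part) (A.perm * B.perm) (blockOf (A.part ⊔ B.part) c)) / 2) :
    ∀ c : Quotient (A.part ⊔ B.part),
      (surfColRestr A.part A.perm g (blockOf (A.part ⊔ B.part) c)
          + surfColRestr B.part B.perm h (blockOf (A.part ⊔ B.part) c)
        = surfColRestr (A.part ⊔ B.part) (A.perm * B.perm) k (blockOf (A.part ⊔ B.part) c)) ∧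
      ∃ m : ℕ, k c = genusSum A.part g (blockOf (A.part ⊔ B.part) c)
          + genusSum B.part h (blockOf (A.part ⊔ B.part) c) + m := by
  intro c
  obtain ⟨m, heq, hbcS⟩ := block_numeric (A := A) (B := B) c
  have hgs : genusSum (A.part ⊔ B.part) k (blockOf (A.part ⊔ B.part) c) = k c :=
    genusSum_block _ k c
  have hcol : colRestr A.part A.perm (blockOf (A.part ⊔ B.part) c)
      + colRestr B.part B.perm (blockOf (A.part ⊔ B.part) c)
      - colRestr (A.part ⊔ B.part) (A.perm * B.perm) (blockOf (A.part ⊔ B.part) c)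
      = 2 * (m : ℚ) := by
    rw [colRestr, colRestr, colRestr, hbcS]
    linarith [heq]
  constructor
  · conv_rhs => rw [surfColRestr]
    rw [hgs, hk c]
    ring
  · refine ⟨m, ?_⟩
    rw [hk c]
    simp only [surfColRestr]
    linarith [hcol]
end
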